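/- There exists a finitely-additive signed measure ν minimising the supremum distance from f_{k,n} to the space of finitely-additive signed measures on Ω_{k,n}, such that for every j ≤ n the map x ↦ ν({x}) is constant on X_j. -/
import Mathlib


open Finset

def fkn (n k : ℕ) (A : Finset (Fin n × Fin k)) : ℝ :=
  if A = ∅ then 0
  else if (∀ j : Fin n, ∃ i : Fin k, (j, i) ∈ A) ∧ (∃ j : Fin n, ∀ i : Fin k, (j, i) ∈ A)
    then 3 else 1

def IsAdditive {Ω : Type*} [DecidableEq Ω] (μ : Finset Ω → ℝ) : Prop :=
  μ ∅ = 0 ∧ ∀ A B : Finset Ω, Disjoint A B → μ (A ∪ B) = μ A + μ B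


lemma additive_sum {Ω : Type*} [DecidableEq Ω] {μ : Finset Ω → ℝ}
    (h : IsAdditive μ) :
    ∀ A : Finset Ω, μ A = ∑ x ∈ A, μ {x} := by
  intro A
  induction A using Finset.induction_on with
  | empty => simp [h.1]
  | @insert a s ha ih =>
      have h2 : μ (insert a s) = μ {a} + μ s := by
        rw [Finset.insert_eq]
        exact h.2 {a} s (by simpa using ha)
      rw [h2, ih, Finset.sum_insert ha]

-- card lower bound for f=3 sets
lemma card_ge3 {n k : ℕ} (A : Finset (Fin n × Fin k))
    (h1 : ∀ j : Fin n, ∃ i : Fin k, (j, i) ∈ A) (j0 : Fin n) (h2 : ∀ i : Fin k, (j0, i) ∈ A) :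
    k + (n - 1) ≤ A.card := by
  classical
  have hsplit := Finset.card_filter_add_card_filter_not
    (s := A) (p := fun x => x.1 = j0)
  have hk' : k ≤ (A.filter (fun x => x.1 = j0)).card := by
    have : ({j0} : Finset (Fin n)) ×ˢ (univ : Finset (Fin k)) ⊆ A.filter (fun x => x.1 = j0) := by
      intro x hx
      simp only [Finset.mem_product, Finset.mem_singleton, Finset.mem_univ] at hx
      simp only [Finset.mem_filter, hx.1]
      exact ⟨by rw [show x = (j0, x.2) by rw [← hx.1]] ; exact h2 x.2, trivial⟩
    have := Finset.card_le_card this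
    simpa using this
  have hn' : n - 1 ≤ (A.filter (fun x => ¬ x.1 = j0)).card := by
    have hsub : (univ : Finset (Fin n)).erase j0 ⊆ (A.filter (fun x => ¬ x.1 = j0)).image Prod.fst := by
      intro j hj
      rw [Finset.mem_erase] at hj
      obtain ⟨i, hi⟩ := h1 j
      refine Finset.mem_image.2 ⟨(j, i), ?_, rfl⟩
      simp [hi, hj.1]
    calc n - 1 = ((univ : Finset (Fin n)).erase j0).card := by
              rw [Finset.card_erase_of_mem (Finset.mem_univ _)]; simp
      _ ≤ ((A.filter (fun x => ¬ x.1 = j0)).image Prod.fst).card := Finset.card_le_card hsub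
      _ ≤ _ := Finset.card_image_le
  omega

lemma card_le1 {n k : ℕ} (hn : 1 ≤ n) (hk : 1 ≤ k) (A : Finset (Fin n × Fin k))
    (h : ¬ ((∀ j : Fin n, ∃ i : Fin k, (j, i) ∈ A) ∧ (∃ j : Fin n, ∀ i : Fin k, (j, i) ∈ A))) :
    A.card ≤ max (n*k - k) (n*k - n) := by
  classical
  by_cases h1 : ∀ j : Fin n, ∃ i : Fin k, (j, i) ∈ A
  · -- no full block: ∀ j, ∃ i, (j,i) ∉ A
    have h2 : ∀ j : Fin n, ∃ i : Fin k, (j, i) ∉ A := by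
      by_contra hcon
      push_neg at hcon
      obtain ⟨j, hj⟩ := hcon
      exact h ⟨h1, j, hj⟩
    choose g hg using h2
    have hsub : A ⊆ (univ : Finset (Fin n × Fin k)) \ (univ.image (fun j => (j, g j))) := by
      intro x hx
      rw [Finset.mem_sdiff]
      refine ⟨Finset.mem_univ _, ?_⟩
      intro hxim
      rw [Finset.mem_image] at hxim
      obtain ⟨j, _, hj⟩ := hxim
      exact hg j (hj ▸ hx)
    refine le_max_of_le_right ?_
    calc A.card ≤ _ := Finset.card_le_card hsub
      _ = n*k - n := by
          rw [Finset.card_sdiff_of_subset (Finset.subset_univ _),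
            Finset.card_image_of_injective _ (fun a b hab => congrArg Prod.fst hab)]
          simp [Fintype.card_prod]
  · push_neg at h1
    obtain ⟨j, hj⟩ := h1
    have hsub : A ⊆ (univ : Finset (Fin n × Fin k)) \ (({j} : Finset (Fin n)) ×ˢ univ) := by
      intro x hx
      rw [Finset.mem_sdiff]
      refine ⟨Finset.mem_univ _, ?_⟩
      intro hxm
      simp only [Finset.mem_product, Finset.mem_singleton] at hxm
      exact hj x.2 (by rwa [show (j, x.2) = x by rw [← hxm.1]])
    refine le_max_of_le_left ?_
    calc A.card ≤ _ := Finset.card_le_card hsub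
      _ = n*k - k := by
          rw [Finset.card_sdiff_of_subset (Finset.subset_univ _)]
          simp [Fintype.card_prod]

set_option maxHeartbeats 2000000 in
theorem stmt_12 (n k : ℕ) (hn : 2 ≤ n) (hk : 2 ≤ k) :
    ∃ ν : Finset (Fin n × Fin k) → ℝ, IsAdditive ν ∧
      (∀ j : Fin n, ∀ x y : Fin k, ν {(j, x)} = ν {(j, y)}) ∧
      (∀ μ : Finset (Fin n × Fin k) → ℝ, IsAdditive μ →
        ∀ C : ℝ, (∀ A, |fkn n k A - μ A| ≤ C) → ∀ A, |fkn n k A - ν A| ≤ C) := by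
  classical
  set M : ℕ := max (n*k - k) (n*k - n) with hMdef
  have hn1 : (1:ℝ) ≤ n := by exact_mod_cast Nat.one_le_of_lt hn
  have hn2 : (2:ℝ) ≤ n := by exact_mod_cast hn
  have hk2 : (2:ℝ) ≤ k := by exact_mod_cast hk
  have hM1 : (n:ℝ)*k - k ≤ M := by
    have h1 : n*k - k ≤ M := le_max_left _ _
    have h2 : k ≤ n*k := Nat.le_mul_of_pos_left k (by omega)
    have h3 := (Nat.cast_le (α := ℝ)).2 h1
    rw [Nat.cast_sub h2] at h3
    push_cast at h3 ⊢
    linarith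
  have hM2 : (n:ℝ)*k - n ≤ M := by
    have h1 : n*k - n ≤ M := le_max_right _ _
    have h2 : n ≤ n*k := Nat.le_mul_of_pos_right n (by omega)
    have h3 := (Nat.cast_le (α := ℝ)).2 h1
    rw [Nat.cast_sub h2] at h3
    push_cast at h3 ⊢
    linarith
  have hMpos : (0:ℝ) < M := by nlinarith
  set D : ℝ := ((n:ℝ) + k - 1) + M with hDdef
  have hDpos : (0:ℝ) < D := by rw [hDdef]; nlinarith
  refine ⟨fun A => 4 / D * A.card, ⟨by simp, ?_⟩, fun j x y => by simp, ?_⟩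
  · intro A B hAB
    simp only
    rw [Finset.card_union_of_disjoint hAB]
    push_cast
    ring
  intro μ hμ C hC A
  have hsum := additive_sum hμ
  set S : ℝ := μ univ with hSdef
  set X : Fin n → Finset (Fin n × Fin k) := fun j => ({j} : Finset (Fin n)) ×ˢ univ with hX
  set Y : Fin k → Finset (Fin n × Fin k) := fun i => (univ : Finset (Fin n)) ×ˢ {i} with hY
  have hXsum : ∀ j, μ (X j) = ∑ i : Fin k, μ {(j, i)} := by
    intro j; rw [hsum, hX]; rw [Finset.sum_product]; simp
  have hYsum : ∀ i, μ (Y i) = ∑ j : Fin n, μ {(j, i)} := by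
    intro i; rw [hsum, hY]; rw [Finset.sum_product]; simp
  have hSX : ∑ j, μ (X j) = S := by
    simp only [hXsum]
    rw [hSdef, hsum univ]
    exact (Fintype.sum_prod_type (f := fun p => μ {p})).symm
  have hSY : ∑ i, μ (Y i) = S := by
    simp only [hYsum]
    rw [hSdef, hsum univ, Finset.sum_comm]
    exact (Fintype.sum_prod_type (f := fun p => μ {p})).symm
  set Arow : Fin n → Finset (Fin n × Fin k) := fun j => univ.filter (fun x => ¬ x.1 = j) with hAr
  set Acol : Fin k → Finset (Fin n × Fin k) := fun i => univ.filter (fun x => ¬ x.2 = i) with hAc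
  set B : Fin n → Fin k → Finset (Fin n × Fin k) :=
    fun j i => univ.filter (fun x => x.1 = j ∨ x.2 = i) with hBdef
  have hrowP : ∀ j, μ (Arow j) = S - μ (X j) := by
    intro j
    have hU : X j ∪ Arow j = univ := by
      ext x; simp only [hX, hAr, Finset.mem_union, Finset.mem_product, Finset.mem_singleton,
        Finset.mem_univ, Finset.mem_filter, true_and, and_true]
      tauto
    have hd : Disjoint (X j) (Arow j) := by
      rw [Finset.disjoint_left]
      intro x hx hx'
      simp only [hX, Finset.mem_product, Finset.mem_singleton] at hx
      simp only [hAr, Finset.mem_filter] at hx'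
      exact hx'.2 hx.1
    have := hμ.2 _ _ hd
    rw [hU] at this
    rw [hSdef, this]; ring
  have hcolP : ∀ i, μ (Acol i) = S - μ (Y i) := by
    intro i
    have hU : Y i ∪ Acol i = univ := by
      ext x; simp only [hY, hAc, Finset.mem_union, Finset.mem_product, Finset.mem_singleton,
        Finset.mem_univ, Finset.mem_filter, true_and, and_true]
      tauto
    have hd : Disjoint (Y i) (Acol i) := by
      rw [Finset.disjoint_left]
      intro x hx hx'
      simp only [hY, Finset.mem_product, Finset.mem_singleton] at hx
      simp only [hAc, Finset.mem_filter] at hx'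
      exact hx'.2 hx.2
    have := hμ.2 _ _ hd
    rw [hU] at this
    rw [hSdef, this]; ring
  have hBval : ∀ j i, μ (B j i) = μ (X j) + μ (Y i) - μ {(j, i)} := by
    intro j i
    have hBeq : B j i = X j ∪ (Y i).erase (j, i) := by
      ext x
      simp only [hBdef, hX, hY, Finset.mem_filter, Finset.mem_univ, true_and, Finset.mem_union,
        Finset.mem_product, Finset.mem_singleton, Finset.mem_erase, and_true]
      constructor
      · rintro (h | h)
        · exact Or.inl h
        · by_cases hj : x.1 = j
          · exact Or.inl hj
          · exact Or.inr ⟨fun he => hj (by rw [he]), h⟩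
      · rintro (h | ⟨-, h⟩)
        · exact Or.inl h
        · exact Or.inr h
    have hd : Disjoint (X j) ((Y i).erase (j, i)) := by
      rw [Finset.disjoint_left]
      intro x hx hx'
      simp only [hX, Finset.mem_product, Finset.mem_singleton] at hx
      simp only [hY, Finset.mem_erase, Finset.mem_product, Finset.mem_singleton] at hx'
      exact hx'.1 (Prod.ext hx.1 hx'.2.2)
    have hYe : μ (Y i) = μ {(j, i)} + μ ((Y i).erase (j, i)) := by
      have hmem : (j, i) ∈ Y i := by simp [hY]
      have hni : (j, i) ∉ (Y i).erase (j, i) := Finset.notMem_erase _ _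
      have := hμ.2 {(j, i)} ((Y i).erase (j, i)) (by simpa using hni)
      rw [← Finset.insert_eq, Finset.insert_erase hmem] at this
      exact this
    rw [hBeq, hμ.2 _ _ hd]
    linarith
  -- fkn values
  have hfB : ∀ j i, fkn n k (B j i) = 3 := by
    intro j i
    have hmem : (j, i) ∈ B j i := by simp [hBdef]
    have hne : B j i ≠ ∅ := Finset.ne_empty_of_mem hmem
    simp only [fkn, if_neg hne]
    rw [if_pos]
    refine ⟨fun j' => ⟨i, by simp [hBdef]⟩, j, fun i' => by simp [hBdef]⟩
  have hfRow : ∀ j, fkn n k (Arow j) = 1 := by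
    intro j
    obtain ⟨j', hj'⟩ := Fintype.exists_ne_of_one_lt_card (by simp; omega) j
    have hmem : (j', ⟨0, by omega⟩) ∈ Arow j := by simp [hAr, hj']
    have hne : Arow j ≠ ∅ := Finset.ne_empty_of_mem hmem
    simp only [fkn, if_neg hne]
    rw [if_neg]
    rintro ⟨h1, -⟩
    obtain ⟨i, hi⟩ := h1 j
    simp [hAr] at hi
  have hfCol : ∀ i, fkn n k (Acol i) = 1 := by
    intro i
    obtain ⟨i', hi'⟩ := Fintype.exists_ne_of_one_lt_card (by simp; omega) i
    have hmem : ((⟨0, by omega⟩ : Fin n), i') ∈ Acol i := by simp [hAc, hi']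
    have hne : Acol i ≠ ∅ := Finset.ne_empty_of_mem hmem
    simp only [fkn, if_neg hne]
    rw [if_neg]
    rintro ⟨-, j, h2⟩
    have := h2 i
    simp [hAc] at this
  -- summed inequalities
  have habs_row : |(n:ℝ) - ((n:ℝ) - 1) * S| ≤ n * C := by
    have h1 : ∀ j, |1 - (S - μ (X j))| ≤ C := by
      intro j
      have := hC (Arow j)
      rwa [hfRow j, hrowP j] at this
    have e1 : ∑ j : Fin n, (1 - (S - μ (X j))) = (n:ℝ) - ((n:ℝ) - 1) * S := by
      rw [Finset.sum_sub_distrib, Finset.sum_sub_distrib, Finset.sum_const, Finset.sum_const, hSX]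
      simp [Finset.card_univ]
      ring
    calc |(n:ℝ) - ((n:ℝ) - 1) * S| = |∑ j : Fin n, (1 - (S - μ (X j)))| := by rw [e1]
      _ ≤ ∑ j : Fin n, |1 - (S - μ (X j))| := Finset.abs_sum_le_sum_abs _ _
      _ ≤ ∑ _j : Fin n, C := Finset.sum_le_sum (fun j _ => h1 j)
      _ = n * C := by simp [Finset.card_univ, mul_comm]
  have habs_col : |(k:ℝ) - ((k:ℝ) - 1) * S| ≤ k * C := by
    have h1 : ∀ i, |1 - (S - μ (Y i))| ≤ C := by
      intro i
      have := hC (Acol i)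
      rwa [hfCol i, hcolP i] at this
    have e1 : ∑ i : Fin k, (1 - (S - μ (Y i))) = (k:ℝ) - ((k:ℝ) - 1) * S := by
      rw [Finset.sum_sub_distrib, Finset.sum_sub_distrib, Finset.sum_const, Finset.sum_const, hSY]
      simp [Finset.card_univ]
      ring
    calc |(k:ℝ) - ((k:ℝ) - 1) * S| = |∑ i : Fin k, (1 - (S - μ (Y i)))| := by rw [e1]
      _ ≤ ∑ i : Fin k, |1 - (S - μ (Y i))| := Finset.abs_sum_le_sum_abs _ _
      _ ≤ ∑ _i : Fin k, C := Finset.sum_le_sum (fun i _ => h1 i)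
      _ = k * C := by simp [Finset.card_univ, mul_comm]
  have habs_B : |3 * ((n:ℝ) * k) - ((n:ℝ) + k - 1) * S| ≤ ((n:ℝ) * k) * C := by
    have h1 : ∀ p : Fin n × Fin k, |3 - μ (B p.1 p.2)| ≤ C := by
      intro p
      have := hC (B p.1 p.2)
      rwa [hfB p.1 p.2] at this
    have hA1 : ∑ p : Fin n × Fin k, μ (X p.1) = (k:ℝ) * S := by
      rw [Fintype.sum_prod_type (f := fun p : Fin n × Fin k => μ (X p.1))]
      simp only [Finset.sum_const, Finset.card_univ, Fintype.card_fin, nsmul_eq_mul]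
      rw [← Finset.mul_sum, hSX]
    have hA2 : ∑ p : Fin n × Fin k, μ (Y p.2) = (n:ℝ) * S := by
      rw [Fintype.sum_prod_type (f := fun p : Fin n × Fin k => μ (Y p.2))]
      simp only [hSY, Finset.sum_const, Finset.card_univ, Fintype.card_fin, nsmul_eq_mul]
    have hA3 : ∑ p : Fin n × Fin k, μ {p} = S := by
      rw [hSdef, hsum univ]
    have e1 : ∑ p : Fin n × Fin k, (3 - μ (B p.1 p.2)) = 3 * ((n:ℝ) * k) - ((n:ℝ) + k - 1) * S := by
      have : ∀ p : Fin n × Fin k, (3:ℝ) - μ (B p.1 p.2) = 3 - (μ (X p.1) + μ (Y p.2) - μ {p}) := by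
        intro p; rw [hBval p.1 p.2]
      simp only [this]
      rw [Finset.sum_sub_distrib, Finset.sum_sub_distrib, Finset.sum_add_distrib, hA1, hA2, hA3,
        Finset.sum_const, Finset.card_univ]
      simp [Fintype.card_prod]
      ring
    calc |3 * ((n:ℝ) * k) - ((n:ℝ) + k - 1) * S| = |∑ p : Fin n × Fin k, (3 - μ (B p.1 p.2))| := by
          rw [e1]
      _ ≤ ∑ p : Fin n × Fin k, |3 - μ (B p.1 p.2)| := Finset.abs_sum_le_sum_abs _ _
      _ ≤ ∑ _p : Fin n × Fin k, C := Finset.sum_le_sum (fun p _ => h1 p)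
      _ = ((n:ℝ) * k) * C := by simp [Finset.card_univ, Fintype.card_prod, mul_comm]
  -- the key constant inequality
  have hVC : 3 * (M:ℝ) - ((n:ℝ) + k - 1) ≤ C * (((n:ℝ) + k - 1) + M) := by
    have hnk0 : (0:ℝ) < (n:ℝ)*k := by nlinarith
    have hB' : 3 * ((n:ℝ)*k) - ((n:ℝ)+k-1) * S ≤ ((n:ℝ)*k) * C := (abs_le.1 habs_B).2
    have hm0S : ((n:ℝ)*k) * (3 - C) ≤ ((n:ℝ)+k-1) * S := by linarith
    have hm0pos : (0:ℝ) < (n:ℝ)+k-1 := by linarith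
    have hMS : (M:ℝ) * S ≤ ((n:ℝ)*k) * (1 + C) := by
      rcases le_total k n with hkn | hnk
      · have hMeq : (M:ℝ) = (n:ℝ)*k - k := by
          have h1 : M = n*k - k := max_eq_left (Nat.sub_le_sub_left hkn (n*k))
          rw [h1, Nat.cast_sub (Nat.le_mul_of_pos_left k (by omega))]
          push_cast; ring
        have hrow' : ((n:ℝ) - 1) * S ≤ (n:ℝ) + (n:ℝ) * C := by
          have := (abs_le.1 habs_row).1; linarith
        rw [hMeq]
        nlinarith [mul_le_mul_of_nonneg_left hrow' (by linarith : (0:ℝ) ≤ (k:ℝ))]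
      · have hMeq : (M:ℝ) = (n:ℝ)*k - n := by
          have h1 : M = n*k - n := max_eq_right (Nat.sub_le_sub_left hnk (n*k))
          rw [h1, Nat.cast_sub (Nat.le_mul_of_pos_right n (by omega))]
          push_cast; ring
        have hcol' : ((k:ℝ) - 1) * S ≤ (k:ℝ) + (k:ℝ) * C := by
          have := (abs_le.1 habs_col).1; linarith
        rw [hMeq]
        nlinarith [mul_le_mul_of_nonneg_left hcol' (by linarith : (0:ℝ) ≤ (n:ℝ))]
    have key : (M:ℝ) * (((n:ℝ)*k) * (3 - C)) ≤ (((n:ℝ)+k-1)) * (((n:ℝ)*k) * (1+C)) := by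
      calc (M:ℝ) * (((n:ℝ)*k) * (3 - C)) ≤ (M:ℝ) * ((((n:ℝ)+k-1)) * S) :=
            mul_le_mul_of_nonneg_left hm0S hMpos.le
        _ = (((n:ℝ)+k-1)) * ((M:ℝ) * S) := by ring
        _ ≤ (((n:ℝ)+k-1)) * (((n:ℝ)*k) * (1+C)) := mul_le_mul_of_nonneg_left hMS hm0pos.le
    have key2 : ((n:ℝ)*k) * (3*(M:ℝ) - ((n:ℝ)+k-1) - C*((((n:ℝ)+k-1)) + M)) ≤ 0 := by linarith
    by_contra hcon
    push_neg at hcon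
    have := mul_pos hnk0 (by linarith : (0:ℝ) < 3*(M:ℝ) - ((n:ℝ)+k-1) - C*((((n:ℝ)+k-1)) + M))
    linarith
  have hC0 : (0:ℝ) ≤ C := by
    have h0 := hC ∅
    rw [hμ.1] at h0
    simpa [fkn] using h0
  by_cases hA0 : A = ∅
  · simp [hA0, fkn, hμ.1, hC0]
  by_cases hA3 : (∀ j : Fin n, ∃ i : Fin k, (j, i) ∈ A) ∧ (∃ j : Fin n, ∀ i : Fin k, (j, i) ∈ A)
  · have hf : fkn n k A = 3 := by
      simp only [fkn]
      rw [if_neg hA0, if_pos hA3]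
    obtain ⟨h1, j0, h2⟩ := hA3
    have hcard1 : (k:ℝ) + ((n:ℝ) - 1) ≤ A.card := by
      have hg := card_ge3 A h1 j0 h2
      have hg2 := (Nat.cast_le (α := ℝ)).2 hg
      rw [Nat.cast_add, Nat.cast_sub (by omega : 1 ≤ n)] at hg2
      push_cast at hg2 ⊢
      linarith
    have hcard2 : (A.card : ℝ) ≤ (n:ℝ)*k := by
      have hle : A.card ≤ n*k := by
        have := Finset.card_le_univ A
        simpa [Finset.card_univ, Fintype.card_prod] using this
      exact_mod_cast hle
    rw [hf]
    simp only
    have key : (3:ℝ) - 4/D*(A.card:ℝ) = (3*D - 4*A.card)/D := by field_simp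
    rw [key, abs_div, abs_of_pos hDpos, div_le_iff₀ hDpos]
    rw [abs_le]
    constructor
    · rw [hDdef]; nlinarith
    · rw [hDdef]
      nlinarith [mul_nonneg (by linarith : (0:ℝ) ≤ (n:ℝ) - 2) (by linarith : (0:ℝ) ≤ (k:ℝ))]
  · have hf : fkn n k A = 1 := by
      simp only [fkn]
      rw [if_neg hA0, if_neg hA3]
    have hcard1 : (1:ℝ) ≤ A.card := by
      have : 1 ≤ A.card := Finset.card_pos.2 (Finset.nonempty_iff_ne_empty.2 hA0)
      exact_mod_cast this
    have hcard2 : (A.card:ℝ) ≤ M := by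
      have := card_le1 (by omega) (by omega) A hA3
      exact_mod_cast this
    rw [hf]
    simp only
    have key : (1:ℝ) - 4/D*(A.card:ℝ) = (D - 4*A.card)/D := by field_simp
    rw [key, abs_div, abs_of_pos hDpos, div_le_iff₀ hDpos]
    rw [abs_le]
    constructor
    · rw [hDdef]; nlinarith
    · rw [hDdef]
      nlinarith [mul_nonneg (by linarith : (0:ℝ) ≤ (n:ℝ) - 2) (by linarith : (0:ℝ) ≤ (k:ℝ) - 1)]
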